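/- Let B = (P, N, m, φ) be a quantum background, let A, B', C be parameter rings with morphisms α: A → C and β: B' → C, and let A×_C B' = {(a,b) : α(a) = β(b)} be the fibered product parameter ring. Then the natural map η: QM_B(A×_C B') → QM_B(A) ×_{QM_B(C)} QM_B(B') is a bijection. (In other words, the functor QM_B satisfies the Schlessinger condition.) -/

import Mathlib

noncomputable section

open TensorProduct DirectSum

/-- The parity (sign) operator of a ℤ-graded module: `x ↦ (-1)^{|x|} x` on homogeneous
elements, extended linearly. -/
def parityOp {R M : Type*} [CommRing R] [AddCommGroup M] [Module R M]
    (g : ℤ → Submodule R M) [DirectSum.Decomposition g] : M →ₗ[R] M :=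
  ((DirectSum.decomposeLinearEquiv g).symm.toLinearMap).comp
    ((DFinsupp.mapRange.linearMap
      (fun i => ((Int.negOnePow i : ℤ) • (LinearMap.id : g i →ₗ[R] g i)))).comp
      (DirectSum.decomposeLinearEquiv g).toLinearMap)

/-- Projection of a ℤ-graded module onto its even part. -/
def evenOp {R M : Type*} [CommRing R] [AddCommGroup M] [Module R M]
    (g : ℤ → Submodule R M) [DirectSum.Decomposition g] : M →ₗ[R] M :=
  ((DirectSum.decomposeLinearEquiv g).symm.toLinearMap).comp
    ((DFinsupp.mapRange.linearMap
      (fun i => ((if Even i then (1:ℤ) else 0) • (LinearMap.id : g i →ₗ[R] g i)))).comp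
      (DirectSum.decomposeLinearEquiv g).toLinearMap)

/-- Projection of a ℤ-graded module onto its odd part. -/
def oddOp {R M : Type*} [CommRing R] [AddCommGroup M] [Module R M]
    (g : ℤ → Submodule R M) [DirectSum.Decomposition g] : M →ₗ[R] M :=
  ((DirectSum.decomposeLinearEquiv g).symm.toLinearMap).comp
    ((DFinsupp.mapRange.linearMap
      (fun i => ((if Even i then (0:ℤ) else 1) • (LinearMap.id : g i →ₗ[R] g i)))).comp
      (DirectSum.decomposeLinearEquiv g).toLinearMap)

/-- All the properties making `(A, aG, mA, dA)` a parameter ring: a differential graded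
Artin local `Λ = k[[ℏ]]`-algebra with residue field `k`:
graded-commutative, with (two-sided, graded) nilpotent maximal ideal `mA`,
finite-dimensional over `k`, residue field `k`, and a degree-one square-zero
derivation `dA`. -/
structure IsParamRing (k : Type) [Field k] (A : Type) [Ring A]
    [Algebra (PowerSeries k) A] (aG : ℤ → Submodule (PowerSeries k) A)
    [GradedAlgebra aG]
    (mA : Submodule (PowerSeries k) A) (dA : A →ₗ[PowerSeries k] A) : Prop where
  /-- graded commutativity of `A` -/
  gcomm : ∀ (i j : ℤ) (a b : A), a ∈ aG i → b ∈ aG j →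
    a * b = ((Int.negOnePow (i * j) : ℤ)) • (b * a)
  /-- `mA` is a two-sided ideal -/
  mul_mem_left : ∀ (x : A) (a : A), a ∈ mA → x * a ∈ mA
  mul_mem_right : ∀ (x : A) (a : A), a ∈ mA → a * x ∈ mA
  /-- `mA` is nilpotent -/
  nilpotent : ∃ n : ℕ, ∀ l : List A, (∀ x ∈ l, x ∈ mA) → l.length = n → l.prod = 0
  /-- `A` is local with maximal ideal `mA` -/
  local' : ∀ a : A, a ∈ mA ∨ IsUnit a
  one_not_mem : (1 : A) ∉ mA
  /-- the residue field is `k` -/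
  residue : ∀ a : A, ∃ c : k, a - algebraMap (PowerSeries k) A (PowerSeries.C (R := k) c) ∈ mA
  /-- `A` (equivalently, its maximal ideal) is finite dimensional over `k` -/
  findim : ∃ s : Finset A, ∀ x : A, ∃ c : A → k,
    x = ∑ y ∈ s, algebraMap (PowerSeries k) A (PowerSeries.C (R := k) (c y)) * y
  /-- the maximal ideal is graded -/
  max_graded : ∀ a ∈ mA, ∀ i : ℤ,
    ((DirectSum.decompose aG a i : aG i) : A) ∈ mA
  /-- `dA` is a degree-one derivation with `dA² = 0` -/
  d_graded : ∀ (i : ℤ), ∀ a ∈ aG i, dA a ∈ aG (i + 1)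
  leibniz : ∀ (i : ℤ) (a b : A), a ∈ aG i →
    dA (a * b) = dA a * b + ((Int.negOnePow i : ℤ)) • (a * dA b)
  dd : ∀ a : A, dA (dA a) = 0

section Background

variable {k : Type} [Field k] [CharZero k]
  -- the ring `P` of a quantum background
  {P : Type} [Ring P] [Algebra (PowerSeries k) P]
  (pG : ℤ → Submodule (PowerSeries k) P) [GradedAlgebra pG]
  -- the module `N` of a quantum background
  {N : Type} [AddCommGroup N] [Module (PowerSeries k) N] [Module P N]
  [IsScalarTower (PowerSeries k) P N] [SMulCommClass (PowerSeries k) P N]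
  (nG : ℤ → Submodule (PowerSeries k) N) [DirectSum.Decomposition nG]
  -- the divided bracket `[·,·]/ℏ` of the classical limit of `P`
  (divB : P →ₗ[PowerSeries k] P →ₗ[PowerSeries k] P)
  -- structure and vacuum
  (m : P) (φ : N)
  -- a parameter ring `(A, dA)` with maximal ideal `mA`
  {A : Type} [Ring A] [Algebra (PowerSeries k) A]
  (aG : ℤ → Submodule (PowerSeries k) A) [GradedAlgebra aG]
  (mA : Submodule (PowerSeries k) A)
  (dA : A →ₗ[PowerSeries k] A)

/-- All the properties making `(P, N, m, φ)` (together with the grading data and the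
divided bracket `divB`) a quantum background: `P` is graded with classical limit,
witnessed by the divided bracket `divB = [·,·]/ℏ` (so that
`ℏ • divB α β = αβ - (-1)^{|α||β|} βα`, i.e. `P/ℏP` is graded-commutative),
`N` is a graded `P`-module, `m ∈ P¹` with `m² = 0`, and `φ ∈ N⁰` with `mφ = 0`. -/
structure IsBackground : Prop where
  divB_spec : ∀ (i j : ℤ) (α β : P), α ∈ pG i → β ∈ pG j →
    (PowerSeries.X : PowerSeries k) • divB α β
      = α * β - ((Int.negOnePow (i * j) : ℤ)) • (β * α)
  m_mem : m ∈ pG 1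
  m_sq : m * m = 0
  vac_mem : φ ∈ nG 0
  m_vac : m • φ = 0
  act_graded : ∀ (i j : ℤ) (p : P) (n : N), p ∈ pG i → n ∈ nG j → p • n ∈ nG (i + j)

/-- The action of `P` on `N`, as a `Λ`-bilinear map. -/
def actP : P →ₗ[PowerSeries k] N →ₗ[PowerSeries k] N where
  toFun p :=
    { toFun := fun n => p • n
      map_add' := fun x y => smul_add p x y
      map_smul' := fun c n => (smul_comm c p n).symm }
  map_add' p q := by ext n; exact add_smul p q n
  map_smul' c p := by ext n; exact smul_assoc c p n

/-- `p ↦ p • φ`. -/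
def toVac : P →ₗ[PowerSeries k] N := (actP (k := k) (P := P) (N := N)).flip φ

/-- The divided bracket `[·,·]/ℏ` extended to `P ⊗_Λ A` with Koszul signs:
`[α⊗a, β⊗b]/ℏ = (-1)^{|a||β|} ([α,β]/ℏ) ⊗ (ab)`. -/
def dbA : (P ⊗[PowerSeries k] A) →ₗ[PowerSeries k]
    (P ⊗[PowerSeries k] A) →ₗ[PowerSeries k] (P ⊗[PowerSeries k] A) :=
  (TensorProduct.homTensorHomMap (RingHom.id (PowerSeries k)) P A P A).comp
      (TensorProduct.map divB ((LinearMap.mul (PowerSeries k) A).comp (evenOp aG)))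
    + (TensorProduct.homTensorHomMap (RingHom.id (PowerSeries k)) P A P A).comp
      (TensorProduct.map (divB.compl₂ (parityOp pG))
        ((LinearMap.mul (PowerSeries k) A).comp (oddOp aG)))

/-- The action of `P ⊗_Λ A` on `N ⊗_Λ A` with Koszul signs:
`(p⊗a) • (n⊗b) = (-1)^{|a||n|} (p•n) ⊗ (ab)`. -/
def actPA : (P ⊗[PowerSeries k] A) →ₗ[PowerSeries k]
    (N ⊗[PowerSeries k] A) →ₗ[PowerSeries k] (N ⊗[PowerSeries k] A) :=
  (TensorProduct.homTensorHomMap (RingHom.id (PowerSeries k)) N A N A).comp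
      (TensorProduct.map (actP (k := k) (P := P) (N := N))
        ((LinearMap.mul (PowerSeries k) A).comp (evenOp aG)))
    + (TensorProduct.homTensorHomMap (RingHom.id (PowerSeries k)) N A N A).comp
      (TensorProduct.map ((actP (k := k) (P := P) (N := N)).compl₂ (parityOp nG))
        ((LinearMap.mul (PowerSeries k) A).comp (oddOp aG)))

/-- `x ↦ x • (φ ⊗ 1)`, sending `P ⊗_Λ A` onto the cyclic submodule `C_A = (P ⊗_Λ A)φ`
of `N ⊗_Λ A` generated by the vacuum (`φ` has degree `0`, so no signs occur). -/
def actVac : (P ⊗[PowerSeries k] A) →ₗ[PowerSeries k] (N ⊗[PowerSeries k] A) :=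
  LinearMap.rTensor A (toVac (k := k) (P := P) φ)

/-- The cyclic submodule `C_A = (P ⊗_Λ A)φ ⊆ N ⊗_Λ A` generated by the vacuum. -/
def cyclicSub : Submodule (PowerSeries k) (N ⊗[PowerSeries k] A) :=
  LinearMap.range (actVac (k := k) (P := P) (A := A) φ)

/-- The degree-zero part `(P ⊗_Λ 𝔪_A)⁰` of `P ⊗ 𝔪_A`. -/
def degZeroMax : Submodule (PowerSeries k) (P ⊗[PowerSeries k] A) :=
  Submodule.span (PowerSeries k)
    {x | ∃ i : ℤ, ∃ p ∈ pG i, ∃ a : A,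
      a ∈ aG (-i) ∧ a ∈ mA ∧ x = p ⊗ₜ[PowerSeries k] a}

/-- `e^{π/ℏ} m e^{-π/ℏ} := Σ_{j≥0} (1/j!) ([-,π]/ℏ)^j (m)`, the sum truncated at `n`
(all terms with `j ≥ n` vanish for suitable `n` since `𝔪_A` is nilpotent). -/
def expConj (π : P ⊗[PowerSeries k] A) (n : ℕ) : P ⊗[PowerSeries k] A :=
  ∑ j ∈ Finset.range n,
    algebraMap k (PowerSeries k) ((j.factorial : k)⁻¹) •
      (((dbA pG divB aG).flip π ^ j) (m ⊗ₜ (1 : A)))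

/-- `d_A π`, i.e. `(1 ⊗ d_A) π` with the Koszul sign `(-1)^{|p|} p ⊗ d_A a`. -/
def dPi (π : P ⊗[PowerSeries k] A) : P ⊗[PowerSeries k] A :=
  TensorProduct.map (parityOp pG) dA π

/-- `ℏ e^{π/ℏ} d_A(e^{-π/ℏ}) := Σ_{j≥0} (1/(j+1)!) ([-,π]/ℏ)^j (d_A π)`, truncated at
`n`. -/
def expD (π : P ⊗[PowerSeries k] A) (n : ℕ) : P ⊗[PowerSeries k] A :=
  ∑ j ∈ Finset.range n,
    algebraMap k (PowerSeries k) (((j+1).factorial : k)⁻¹) •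
      (((dbA pG divB aG).flip π ^ j) (dPi pG dA π))

/-- The quantum master equation for a quantum background `(P, N, m, φ)` over the
parameter ring `(A, dA)`:  `π` is an element of `(P ⊗ 𝔪_A)⁰` such that
`(e^{π/ℏ} m e^{-π/ℏ} - ℏ e^{π/ℏ} d_A(e^{-π/ℏ})) φ = 0`.  The exponential sums are
finite: all iterated divided brackets vanish from some stage `n` onwards, because
`𝔪_A` is nilpotent. -/
def IsQMSol (π : P ⊗[PowerSeries k] A) : Prop :=
  π ∈ degZeroMax pG aG mA ∧
  ∃ n : ℕ,
    (∀ j ≥ n, ((dbA pG divB aG).flip π ^ j) (m ⊗ₜ (1 : A)) = 0 ∧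
      ((dbA pG divB aG).flip π ^ j) (dPi pG dA π) = 0) ∧
    actVac (k := k) (A := A) φ
      (expConj pG divB m aG π n - expD pG divB aG dA π n) = 0

end Background

section GradedHelpers

variable {R M : Type*} [CommRing R] [AddCommGroup M] [Module R M]

lemma gradedOpAux (g : ℤ → Submodule R M) [DirectSum.Decomposition g]
    (c : ℤ → ℤ) {i : ℤ} {x : M} (hx : x ∈ g i) :
    (((DirectSum.decomposeLinearEquiv g).symm.toLinearMap).comp
    ((DFinsupp.mapRange.linearMap
      (fun i => ((c i) • (LinearMap.id : g i →ₗ[R] g i)))).comp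
      (DirectSum.decomposeLinearEquiv g).toLinearMap)) x = c i • x := by
  have key : (((DirectSum.decomposeLinearEquiv g).symm.toLinearMap).comp
    ((DFinsupp.mapRange.linearMap
      (fun i => ((c i) • (LinearMap.id : g i →ₗ[R] g i)))).comp
      (DirectSum.decomposeLinearEquiv g).toLinearMap)) x
      = (DirectSum.decomposeLinearEquiv g).symm
        ((DFinsupp.mapRange.linearMap (fun i => ((c i) • (LinearMap.id : g i →ₗ[R] g i))))
          (DirectSum.decompose g x)) := rfl
  rw [key, DirectSum.decompose_of_mem g hx]
  have h1 : (DFinsupp.mapRange.linearMap (fun i => ((c i) • (LinearMap.id : g i →ₗ[R] g i))))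
      (DirectSum.of (fun i => g i) i ⟨x, hx⟩)
      = DirectSum.of (fun i => g i) i (c i • ⟨x, hx⟩) := by
    rw [DFinsupp.mapRange.linearMap_apply]
    exact DFinsupp.mapRange_single
  rw [h1]
  have h2 := DirectSum.decompose_symm_of g (c i • (⟨x, hx⟩ : g i))
  rw [DirectSum.decomposeLinearEquiv_symm_apply, h2]
  simp

lemma parityOp_apply_of_mem (g : ℤ → Submodule R M) [DirectSum.Decomposition g]
    {i : ℤ} {x : M} (hx : x ∈ g i) :
    parityOp g x = ((Int.negOnePow i : ℤ)) • x :=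
  gradedOpAux g (fun i => (Int.negOnePow i : ℤ)) hx

lemma evenOp_apply_of_mem (g : ℤ → Submodule R M) [DirectSum.Decomposition g]
    {i : ℤ} {x : M} (hx : x ∈ g i) :
    evenOp g x = (if Even i then (1:ℤ) else 0) • x :=
  gradedOpAux g (fun i => (if Even i then (1:ℤ) else 0)) hx

lemma oddOp_apply_of_mem (g : ℤ → Submodule R M) [DirectSum.Decomposition g]
    {i : ℤ} {x : M} (hx : x ∈ g i) :
    oddOp g x = (if Even i then (0:ℤ) else 1) • x :=
  gradedOpAux g (fun i => (if Even i then (0:ℤ) else 1)) hx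

lemma decompose_eq_on {M' : Type*} [AddCommGroup M'] [Module R M']
    (g : ℤ → Submodule R M) [DirectSum.Decomposition g] {f f' : M →ₗ[R] M'}
    (h : ∀ (i : ℤ), ∀ x ∈ g i, f x = f' x) (x : M) : f x = f' x := by
  classical
  rw [← DirectSum.sum_support_decompose g x, map_sum, map_sum]
  exact Finset.sum_congr rfl fun i _ => h i _ (DirectSum.decompose g x i).2

/-- The degree-`i` projection of a graded module, as an endomorphism. -/
def gradProj (g : ℤ → Submodule R M) [DirectSum.Decomposition g] (i : ℤ) : M →ₗ[R] M :=
  (g i).subtype.comp ((DirectSum.component R ℤ (fun j => (g j : Submodule R M)) i).comp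
    (DirectSum.decomposeLinearEquiv g).toLinearMap)

lemma gradProj_apply (g : ℤ → Submodule R M) [DirectSum.Decomposition g] (i : ℤ) (x : M) :
    gradProj g i x = (DirectSum.decompose g x i : M) := rfl

lemma gradProj_of_mem_same (g : ℤ → Submodule R M) [DirectSum.Decomposition g]
    {i : ℤ} {x : M} (hx : x ∈ g i) : gradProj g i x = x := by
  rw [gradProj_apply]; exact DirectSum.decompose_of_mem_same g hx

lemma gradProj_of_mem_ne (g : ℤ → Submodule R M) [DirectSum.Decomposition g]
    {i j : ℤ} {x : M} (hx : x ∈ g j) (hij : j ≠ i) : gradProj g i x = 0 := by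
  rw [gradProj_apply]; exact DirectSum.decompose_of_mem_ne g hx hij

lemma gradProj_mem (g : ℤ → Submodule R M) [DirectSum.Decomposition g] (i : ℤ) (x : M) :
    gradProj g i x ∈ g i := (DirectSum.decompose g x i).2

end GradedHelpers

section TensorHelpers

variable {R : Type*} [CommRing R]

lemma tensor_prod_decomp {M A B : Type*} [AddCommGroup M] [Module R M]
    [AddCommGroup A] [Module R A] [AddCommGroup B] [Module R B]
    (u : M ⊗[R] (A × B)) :
    u = LinearMap.lTensor M (LinearMap.inl R A B) (LinearMap.lTensor M (LinearMap.fst R A B) u)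
      + LinearMap.lTensor M (LinearMap.inr R A B) (LinearMap.lTensor M (LinearMap.snd R A B) u) := by
  induction u using TensorProduct.induction_on with
  | zero => simp
  | tmul m p =>
      simp only [LinearMap.lTensor_tmul, LinearMap.fst_apply, LinearMap.snd_apply,
        LinearMap.inl_apply, LinearMap.inr_apply, ← TensorProduct.tmul_add]
      congr 1
      exact Prod.ext (by simp) (by simp)
  | add x y hx hy =>
      rw [map_add, map_add, map_add, map_add]
      conv_lhs => rw [hx, hy]
      abel

lemma lTensor_rTensor_comm {M N P Q : Type*} [AddCommGroup M] [Module R M]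
    [AddCommGroup N] [Module R N] [AddCommGroup P] [Module R P] [AddCommGroup Q] [Module R Q]
    (f : M →ₗ[R] P) (g : N →ₗ[R] Q) (x : M ⊗[R] N) :
    LinearMap.lTensor P g (LinearMap.rTensor N f x)
      = LinearMap.rTensor Q f (LinearMap.lTensor M g x) := by
  rw [← LinearMap.comp_apply, ← LinearMap.comp_apply,
    LinearMap.lTensor_comp_rTensor, LinearMap.rTensor_comp_lTensor]

lemma tensor_pair_inj {M F A B : Type*}
    [AddCommGroup M] [Module R M] [Module.Flat R M]
    [AddCommGroup F] [Module R F] [AddCommGroup A] [Module R A]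
    [AddCommGroup B] [Module R B]
    (fA : F →ₗ[R] A) (fB : F →ₗ[R] B)
    (hinj : ∀ x y : F, fA x = fA y → fB x = fB y → x = y)
    (u : M ⊗[R] F) (hA : LinearMap.lTensor M fA u = 0)
    (hB : LinearMap.lTensor M fB u = 0) : u = 0 := by
  have hpi : Function.Injective (fA.prod fB) := fun x y h =>
    hinj x y (congrArg Prod.fst h) (congrArg Prod.snd h)
  have h2 := Module.Flat.lTensor_preserves_injective_linearMap (M := M) (fA.prod fB) hpi
  apply h2
  rw [map_zero]
  have cfst : LinearMap.lTensor M (LinearMap.fst R A B)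
      (LinearMap.lTensor M (fA.prod fB) u) = LinearMap.lTensor M fA u := by
    rw [← LinearMap.lTensor_comp_apply, LinearMap.fst_prod]
  have csnd : LinearMap.lTensor M (LinearMap.snd R A B)
      (LinearMap.lTensor M (fA.prod fB) u) = LinearMap.lTensor M fB u := by
    rw [← LinearMap.lTensor_comp_apply, LinearMap.snd_prod]
  rw [tensor_prod_decomp (LinearMap.lTensor M (fA.prod fB) u), cfst, csnd, hA, hB,
    map_zero, map_zero, add_zero]

lemma tensor_proj_sum {M N : Type*} [AddCommGroup M] [Module R M]
    [AddCommGroup N] [Module R N]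
    (g : ℤ → Submodule R M) [DirectSum.Decomposition g] (u : M ⊗[R] N) :
    ∃ s : Finset ℤ, ∀ t : Finset ℤ, s ⊆ t →
      u = ∑ i ∈ t, LinearMap.rTensor N (gradProj g i) u := by
  classical
  induction u using TensorProduct.induction_on with
  | zero => exact ⟨∅, fun t _ => by simp⟩
  | tmul p n =>
      refine ⟨(DirectSum.decompose g p).support, fun t ht => ?_⟩
      have : ∀ i ∈ t, LinearMap.rTensor N (gradProj g i) (p ⊗ₜ[R] n)
          = (DirectSum.decompose g p i : M) ⊗ₜ[R] n := fun i _ => rfl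
      rw [Finset.sum_congr rfl this, ← TensorProduct.sum_tmul]
      congr 1
      rw [← Finset.sum_subset ht (fun i _ hi => ?_)]
      · exact (DirectSum.sum_support_decompose g p).symm
      · rw [DFinsupp.notMem_support_iff.mp hi]; rfl
  | add x y hx hy =>
      obtain ⟨s1, h1⟩ := hx
      obtain ⟨s2, h2⟩ := hy
      refine ⟨s1 ∪ s2, fun t ht => ?_⟩
      have e1 := h1 t (le_trans Finset.subset_union_left ht)
      have e2 := h2 t (le_trans Finset.subset_union_right ht)
      rw [Finset.sum_congr rfl (fun i _ => map_add (LinearMap.rTensor N (gradProj g i)) x y),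
        Finset.sum_add_distrib]
      conv_lhs => rw [e1, e2]

end TensorHelpers

section Naturality
variable {k : Type} [Field k] [CharZero k]
  {P : Type} [Ring P] [Algebra (PowerSeries k) P]
  (pG : ℤ → Submodule (PowerSeries k) P) [GradedAlgebra pG]
  {N : Type} [AddCommGroup N] [Module (PowerSeries k) N] [Module P N]
  [IsScalarTower (PowerSeries k) P N] [SMulCommClass (PowerSeries k) P N]
  (divB : P →ₗ[PowerSeries k] P →ₗ[PowerSeries k] P)
  (m : P) (φ : N)
  {A : Type} [Ring A] [Algebra (PowerSeries k) A]
  (aG : ℤ → Submodule (PowerSeries k) A) [GradedAlgebra aG]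
  {B : Type} [Ring B] [Algebra (PowerSeries k) B]
  (bG : ℤ → Submodule (PowerSeries k) B) [GradedAlgebra bG]
  (τ : A →ₐ[PowerSeries k] B) (hτ : ∀ i : ℤ, ∀ a ∈ aG i, τ a ∈ bG i)

include hτ in
lemma parityOp_natural (a : A) : τ (parityOp aG a) = parityOp bG (τ a) := by
  have := decompose_eq_on aG (f := τ.toLinearMap.comp (parityOp aG))
    (f' := (parityOp bG).comp τ.toLinearMap) (fun i x hx => by
      simp only [LinearMap.comp_apply, AlgHom.toLinearMap_apply]
      rw [parityOp_apply_of_mem aG hx, parityOp_apply_of_mem bG (hτ i x hx), map_zsmul]) a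
  simpa using this

include hτ in
lemma evenOp_natural (a : A) : τ (evenOp aG a) = evenOp bG (τ a) := by
  have := decompose_eq_on aG (f := τ.toLinearMap.comp (evenOp aG))
    (f' := (evenOp bG).comp τ.toLinearMap) (fun i x hx => by
      simp only [LinearMap.comp_apply, AlgHom.toLinearMap_apply]
      rw [evenOp_apply_of_mem aG hx, evenOp_apply_of_mem bG (hτ i x hx), map_zsmul]) a
  simpa using this

include hτ in
lemma oddOp_natural (a : A) : τ (oddOp aG a) = oddOp bG (τ a) := by
  have := decompose_eq_on aG (f := τ.toLinearMap.comp (oddOp aG))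
    (f' := (oddOp bG).comp τ.toLinearMap) (fun i x hx => by
      simp only [LinearMap.comp_apply, AlgHom.toLinearMap_apply]
      rw [oddOp_apply_of_mem aG hx, oddOp_apply_of_mem bG (hτ i x hx), map_zsmul]) a
  simpa using this

lemma dbA_tmul (p q : P) (a b : A) :
    dbA pG divB aG (p ⊗ₜ[PowerSeries k] a) (q ⊗ₜ[PowerSeries k] b)
      = (divB p q) ⊗ₜ[PowerSeries k] (evenOp aG a * b)
        + (divB p (parityOp pG q)) ⊗ₜ[PowerSeries k] (oddOp aG a * b) := by
  simp [dbA, TensorProduct.homTensorHomMap_apply, LinearMap.mul_apply']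

include hτ in
lemma dbA_natural (x y : P ⊗[PowerSeries k] A) :
    LinearMap.lTensor P τ.toLinearMap (dbA pG divB aG x y)
      = dbA pG divB bG (LinearMap.lTensor P τ.toLinearMap x)
        (LinearMap.lTensor P τ.toLinearMap y) := by
  induction x using TensorProduct.induction_on with
  | zero => simp
  | add u v hu hv => simp only [map_add, LinearMap.add_apply, hu, hv]
  | tmul p a =>
      induction y using TensorProduct.induction_on with
      | zero => simp
      | add u v hu hv => simp only [map_add, hu, hv]
      | tmul q b =>
          rw [dbA_tmul, map_add, LinearMap.lTensor_tmul, LinearMap.lTensor_tmul,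
            LinearMap.lTensor_tmul, LinearMap.lTensor_tmul, dbA_tmul]
          simp only [AlgHom.toLinearMap_apply, map_mul,
            evenOp_natural aG bG τ hτ, oddOp_natural aG bG τ hτ]

include hτ in
lemma dbA_flip_pow_natural (π : P ⊗[PowerSeries k] A) (j : ℕ) (x : P ⊗[PowerSeries k] A) :
    LinearMap.lTensor P τ.toLinearMap (((dbA pG divB aG).flip π ^ j) x)
      = ((dbA pG divB bG).flip (LinearMap.lTensor P τ.toLinearMap π) ^ j)
        (LinearMap.lTensor P τ.toLinearMap x) := by
  induction j generalizing x with
  | zero => simp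
  | succ j ih =>
      rw [pow_succ', pow_succ', Module.End.mul_apply, Module.End.mul_apply,
        LinearMap.flip_apply, LinearMap.flip_apply, dbA_natural pG divB aG bG τ hτ, ih]

include hτ in
lemma expConj_natural (π : P ⊗[PowerSeries k] A) (n : ℕ) :
    LinearMap.lTensor P τ.toLinearMap (expConj pG divB m aG π n)
      = expConj pG divB m bG (LinearMap.lTensor P τ.toLinearMap π) n := by
  unfold expConj
  rw [map_sum]
  refine Finset.sum_congr rfl fun j _ => ?_
  rw [map_smul, dbA_flip_pow_natural pG divB aG bG τ hτ]
  congr 1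
  rw [LinearMap.lTensor_tmul]
  simp

lemma dPi_natural (dA : A →ₗ[PowerSeries k] A) (dB : B →ₗ[PowerSeries k] B)
    (hd : ∀ a, τ (dA a) = dB (τ a)) (π : P ⊗[PowerSeries k] A) :
    LinearMap.lTensor P τ.toLinearMap (dPi pG dA π)
      = dPi pG dB (LinearMap.lTensor P τ.toLinearMap π) := by
  unfold dPi
  induction π using TensorProduct.induction_on with
  | zero => simp
  | add u v hu hv => simp only [map_add, hu, hv]
  | tmul p a =>
      rw [TensorProduct.map_tmul, LinearMap.lTensor_tmul, LinearMap.lTensor_tmul,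
        TensorProduct.map_tmul]
      simp [hd]

include hτ in
lemma expD_natural (dA : A →ₗ[PowerSeries k] A) (dB : B →ₗ[PowerSeries k] B)
    (hd : ∀ a, τ (dA a) = dB (τ a)) (π : P ⊗[PowerSeries k] A) (n : ℕ) :
    LinearMap.lTensor P τ.toLinearMap (expD pG divB aG dA π n)
      = expD pG divB bG dB (LinearMap.lTensor P τ.toLinearMap π) n := by
  unfold expD
  rw [map_sum]
  refine Finset.sum_congr rfl fun j _ => ?_
  rw [map_smul, dbA_flip_pow_natural pG divB aG bG τ hτ,
    dPi_natural pG τ dA dB hd]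

lemma actVac_natural (x : P ⊗[PowerSeries k] A) :
    LinearMap.lTensor N τ.toLinearMap (actVac (k := k) (A := A) φ x)
      = actVac (k := k) (A := B) φ (LinearMap.lTensor P τ.toLinearMap x) := by
  unfold actVac
  exact lTensor_rTensor_comm (toVac (k := k) (P := P) φ) τ.toLinearMap x

lemma expConj_trunc (π : P ⊗[PowerSeries k] A) {n n' : ℕ} (h : n ≤ n')
    (hvan : ∀ j ≥ n, ((dbA pG divB aG).flip π ^ j) (m ⊗ₜ[PowerSeries k] (1 : A)) = 0) :
    expConj pG divB m aG π n' = expConj pG divB m aG π n := by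
  unfold expConj
  rw [← Finset.sum_subset (Finset.range_subset_range.mpr h) (fun j _ hj => ?_)]
  rw [hvan j (le_of_not_gt (fun hc => hj (Finset.mem_range.mpr hc))), smul_zero]

lemma expD_trunc (dA : A →ₗ[PowerSeries k] A) (π : P ⊗[PowerSeries k] A) {n n' : ℕ} (h : n ≤ n')
    (hvan : ∀ j ≥ n, ((dbA pG divB aG).flip π ^ j) (dPi pG dA π) = 0) :
    expD pG divB aG dA π n' = expD pG divB aG dA π n := by
  unfold expD
  rw [← Finset.sum_subset (Finset.range_subset_range.mpr h) (fun j _ hj => ?_)]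
  rw [hvan j (le_of_not_gt (fun hc => hj (Finset.mem_range.mpr hc))), smul_zero]

end Naturality

section DegZeroHelpers

lemma rTensor_gradProj_mem {R M A : Type*} [CommRing R] [AddCommGroup M] [Module R M]
    [AddCommGroup A] [Module R A]
    (gr : ℤ → Submodule R M) [DirectSum.Decomposition gr] (K : ℤ → Submodule R A)
    {u : M ⊗[R] A}
    (hu : u ∈ ⨆ i : ℤ, LinearMap.range (TensorProduct.map (gr i).subtype (K i).subtype))
    (i : ℤ) :
    LinearMap.rTensor A (gradProj gr i) u
      ∈ LinearMap.range (TensorProduct.map (gr i).subtype (K i).subtype) := by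
  refine Submodule.iSup_induction
    (motive := fun u => LinearMap.rTensor A (gradProj gr i) u
      ∈ LinearMap.range (TensorProduct.map (gr i).subtype (K i).subtype)) _ hu ?_
    (by show LinearMap.rTensor A (gradProj gr i) 0 ∈ _; simp)
    (fun x y hx hy => by
      show LinearMap.rTensor A (gradProj gr i) (x + y) ∈ _
      rw [map_add]; exact Submodule.add_mem _ hx hy)
  intro j u hu
  show LinearMap.rTensor A (gradProj gr i) u ∈ _
  obtain ⟨w, rfl⟩ := hu
  have hc := TensorProduct.map_comp (gradProj gr i) LinearMap.id
    (gr j).subtype (K j).subtype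
  rw [LinearMap.id_comp] at hc
  have key : LinearMap.rTensor A (gradProj gr i)
      (TensorProduct.map (gr j).subtype (K j).subtype w)
      = TensorProduct.map ((gradProj gr i).comp (gr j).subtype) (K j).subtype w := by
    have := LinearMap.congr_fun hc w
    rw [LinearMap.comp_apply] at this
    exact this.symm
  rw [key]
  by_cases hij : j = i
  · subst hij
    have : (gradProj gr j).comp (gr j).subtype = (gr j).subtype :=
      LinearMap.ext fun x => gradProj_of_mem_same gr x.2
    rw [this]
    exact ⟨w, rfl⟩
  · have : (gradProj gr i).comp (gr j).subtype = 0 :=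
      LinearMap.ext fun x => gradProj_of_mem_ne gr x.2 hij
    rw [this]
    have h0 : TensorProduct.map (0 : (gr j : Submodule R M) →ₗ[R] M) (K j).subtype w = 0 := by
      rw [← LinearMap.rTensor_comp_lTensor, LinearMap.comp_apply, LinearMap.rTensor_zero]
      simp
    rw [h0]
    exact Submodule.zero_mem _

variable {k : Type} [Field k]
  {P : Type} [Ring P] [Algebra (PowerSeries k) P]
  (pG : ℤ → Submodule (PowerSeries k) P) [GradedAlgebra pG]
  {A : Type} [Ring A] [Algebra (PowerSeries k) A]
  (aG : ℤ → Submodule (PowerSeries k) A) [GradedAlgebra aG]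
  (mA : Submodule (PowerSeries k) A)

lemma degZeroMax_eq :
    degZeroMax pG aG mA = ⨆ i : ℤ, LinearMap.range
      (TensorProduct.map (pG i).subtype ((aG (-i) ⊓ mA)).subtype) := by
  unfold degZeroMax
  have hset : {x : P ⊗[PowerSeries k] A | ∃ i : ℤ, ∃ p ∈ pG i, ∃ a : A,
      a ∈ aG (-i) ∧ a ∈ mA ∧ x = p ⊗ₜ[PowerSeries k] a}
      = ⋃ i : ℤ, {x | ∃ (p : pG i) (q : ((aG (-i) ⊓ mA) : Submodule (PowerSeries k) A)),
          ((pG i).subtype p) ⊗ₜ[PowerSeries k] (((aG (-i) ⊓ mA)).subtype q) = x} := by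
    ext x
    simp only [Set.mem_setOf_eq, Set.mem_iUnion]
    constructor
    · rintro ⟨i, p, hp, a, ha1, ha2, rfl⟩
      exact ⟨i, ⟨p, hp⟩, ⟨a, Submodule.mem_inf.mpr ⟨ha1, ha2⟩⟩, rfl⟩
    · rintro ⟨i, p, q, rfl⟩
      exact ⟨i, p, p.2, q, (Submodule.mem_inf.mp q.2).1, (Submodule.mem_inf.mp q.2).2, rfl⟩
  rw [hset, Submodule.span_iUnion]
  exact iSup_congr fun i => (TensorProduct.range_map_eq_span_tmul _ _).symm

end DegZeroHelpers

section ComponentLift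

set_option maxHeartbeats 1600000 in
lemma component_lift {k : Type} [Field k]
    {P : Type} [Ring P] [Algebra (PowerSeries k) P]
    (pG : ℤ → Submodule (PowerSeries k) P) [GradedAlgebra pG]
    [Module.Free (PowerSeries k) P]
    {A : Type} [Ring A] [Algebra (PowerSeries k) A]
    {B' : Type} [Ring B'] [Algebra (PowerSeries k) B']
    {C : Type} [Ring C] [Algebra (PowerSeries k) C]
    {F : Type} [Ring F] [Algebra (PowerSeries k) F]
    (KA : Submodule (PowerSeries k) A) (KB : Submodule (PowerSeries k) B')
    (KF : Submodule (PowerSeries k) F)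
    (α : A →ₐ[PowerSeries k] C) (β : B' →ₐ[PowerSeries k] C)
    (prA : F →ₐ[PowerSeries k] A) (prB : F →ₐ[PowerSeries k] B')
    (hinj : ∀ x y : F, prA x = prA y → prB x = prB y → x = y)
    (hKFA : ∀ x ∈ KF, prA x ∈ KA) (hKFB : ∀ x ∈ KF, prB x ∈ KB)
    (hcomm : ∀ x : F, α (prA x) = β (prB x))
    (hpairs : ∀ (a : A) (b : B'), a ∈ KA → b ∈ KB → α a = β b →
      ∃ x ∈ KF, prA x = a ∧ prB x = b)
    (i : ℤ) (y : P ⊗[PowerSeries k] F)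
    (hyA : LinearMap.lTensor P prA.toLinearMap y
      ∈ LinearMap.range (TensorProduct.map (pG i).subtype KA.subtype))
    (hyB : LinearMap.lTensor P prB.toLinearMap y
      ∈ LinearMap.range (TensorProduct.map (pG i).subtype KB.subtype))
    (hyM : LinearMap.lTensor P α.toLinearMap (LinearMap.lTensor P prA.toLinearMap y)
         = LinearMap.lTensor P β.toLinearMap (LinearMap.lTensor P prB.toLinearMap y)) :
    y ∈ LinearMap.range (TensorProduct.map (pG i).subtype KF.subtype) := by
  obtain ⟨wA, hwA⟩ := hyA
  obtain ⟨wB, hwB⟩ := hyB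
  -- the retraction of the degree-i inclusion
  let qpart : P →ₗ[PowerSeries k] (pG i) :=
    (DirectSum.component (PowerSeries k) ℤ (fun j => (pG j : Submodule (PowerSeries k) P)) i).comp
      (DirectSum.decomposeLinearEquiv pG).toLinearMap
  have hqp : ∀ x : pG i, qpart (x : P) = x := fun x => by
    show (DirectSum.decompose pG (x : P)) i = x
    rw [DirectSum.decompose_coe pG x]
    exact DirectSum.of_eq_same (β := fun j => ((pG j : Submodule (PowerSeries k) P) : Type)) i x
  have hsplit : ∀ {X : Type} [AddCommGroup X] [Module (PowerSeries k) X] (u : (pG i) ⊗[PowerSeries k] X),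
      LinearMap.rTensor X qpart (LinearMap.rTensor X (pG i).subtype u) = u := by
    intro X _ _ u
    rw [← LinearMap.rTensor_comp_apply]
    have : qpart.comp (pG i).subtype = LinearMap.id := LinearMap.ext fun x => hqp x
    rw [this, LinearMap.rTensor_id, LinearMap.id_apply]
  -- rewrite map subtypes as a composition
  have hfact : ∀ {X Y : Type} [AddCommGroup X] [Module (PowerSeries k) X] [AddCommGroup Y] [Module (PowerSeries k) Y]
      (f : X →ₗ[PowerSeries k] Y) (w : (pG i) ⊗[PowerSeries k] X),
      TensorProduct.map (pG i).subtype f w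
        = LinearMap.rTensor Y (pG i).subtype (LinearMap.lTensor (pG i) f w) := by
    intro X Y _ _ _ _ f w
    rw [← LinearMap.rTensor_comp_lTensor, LinearMap.comp_apply]
  -- matching over C at the (pG i)-level
  have hmatchK : LinearMap.lTensor (pG i) (α.toLinearMap.comp KA.subtype) wA
      = LinearMap.lTensor (pG i) (β.toLinearMap.comp KB.subtype) wB := by
    have e1 : LinearMap.rTensor C (pG i).subtype
        (LinearMap.lTensor (pG i) (α.toLinearMap.comp KA.subtype) wA)
        = LinearMap.lTensor P α.toLinearMap (LinearMap.lTensor P prA.toLinearMap y) := by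
      rw [← hwA, hfact, LinearMap.lTensor_comp_apply, lTensor_rTensor_comm]
    have e2 : LinearMap.rTensor C (pG i).subtype
        (LinearMap.lTensor (pG i) (β.toLinearMap.comp KB.subtype) wB)
        = LinearMap.lTensor P β.toLinearMap (LinearMap.lTensor P prB.toLinearMap y) := by
      rw [← hwB, hfact, LinearMap.lTensor_comp_apply, lTensor_rTensor_comm]
    have := e1.trans (hyM.trans e2.symm)
    calc LinearMap.lTensor (pG i) (α.toLinearMap.comp KA.subtype) wA
        = LinearMap.rTensor C qpart (LinearMap.rTensor C (pG i).subtype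
            (LinearMap.lTensor (pG i) (α.toLinearMap.comp KA.subtype) wA)) := (hsplit _).symm
      _ = LinearMap.rTensor C qpart (LinearMap.rTensor C (pG i).subtype
            (LinearMap.lTensor (pG i) (β.toLinearMap.comp KB.subtype) wB)) := by rw [this]
      _ = LinearMap.lTensor (pG i) (β.toLinearMap.comp KB.subtype) wB := hsplit _
  -- the fibered-product exact sequence on the K-level
  let gA : KF →ₗ[PowerSeries k] KA := (prA.toLinearMap.domRestrict KF).codRestrict KA
    (fun x => hKFA x x.2)
  let gB : KF →ₗ[PowerSeries k] KB := (prB.toLinearMap.domRestrict KF).codRestrict KB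
    (fun x => hKFB x x.2)
  let g : KF →ₗ[PowerSeries k] KA × KB := gA.prod gB
  let hm : (KA × KB) →ₗ[PowerSeries k] C :=
    ((α.toLinearMap.comp KA.subtype).comp (LinearMap.fst (PowerSeries k) KA KB))
      - ((β.toLinearMap.comp KB.subtype).comp (LinearMap.snd (PowerSeries k) KA KB))
  have hex : Function.Exact g hm := by
    intro yy
    constructor
    · intro h0
      have hab : α (yy.1 : A) = β (yy.2 : B') := by
        have : α (yy.1 : A) - β (yy.2 : B') = 0 := by simpa [hm] using h0
        exact sub_eq_zero.mp this
      obtain ⟨x, hxKF, hx1, hx2⟩ := hpairs yy.1 yy.2 yy.1.2 yy.2.2 hab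
      refine ⟨⟨x, hxKF⟩, ?_⟩
      refine Prod.ext (Subtype.ext ?_) (Subtype.ext ?_)
      · exact hx1
      · exact hx2
    · rintro ⟨x, rfl⟩
      simp [hm, g, gA, gB, hcomm]
      exact sub_eq_zero.mpr (hcomm _)
  have hexT := Module.Flat.lTensor_exact P hex
  -- lift
  let w : (pG i) ⊗[PowerSeries k] (KA × KB) :=
    LinearMap.lTensor (pG i) (LinearMap.inl (PowerSeries k) KA KB) wA
      + LinearMap.lTensor (pG i) (LinearMap.inr (PowerSeries k) KA KB) wB
  let W : P ⊗[PowerSeries k] (KA × KB) := LinearMap.rTensor (KA × KB) (pG i).subtype w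
  have hW0 : LinearMap.lTensor P hm W = 0 := by
    have h1 : LinearMap.lTensor P hm W
        = LinearMap.rTensor C (pG i).subtype (LinearMap.lTensor (pG i) hm w) := by
      rw [show (W : P ⊗[PowerSeries k] (KA × KB))
        = LinearMap.rTensor (KA × KB) (pG i).subtype w from rfl, lTensor_rTensor_comm]
    have h2 : LinearMap.lTensor (pG i) hm w = 0 := by
      have c1 : hm.comp (LinearMap.inl (PowerSeries k) KA KB) = α.toLinearMap.comp KA.subtype := by
        ext x; simp [hm]
      have c2 : hm.comp (LinearMap.inr (PowerSeries k) KA KB) = -(β.toLinearMap.comp KB.subtype) := by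
        ext x; simp [hm]
      show LinearMap.lTensor (pG i) hm (LinearMap.lTensor (pG i) (LinearMap.inl (PowerSeries k) KA KB) wA
        + LinearMap.lTensor (pG i) (LinearMap.inr (PowerSeries k) KA KB) wB) = 0
      rw [map_add, ← LinearMap.lTensor_comp_apply, ← LinearMap.lTensor_comp_apply, c1, c2,
        LinearMap.lTensor_neg]
      simp [hmatchK]
      exact add_neg_cancel (LinearMap.lTensor (pG i) (β.toLinearMap.comp KB.subtype) wB)
    rw [h1, h2, map_zero]
  obtain ⟨V, hV⟩ := (hexT W).mp hW0
  refine ⟨LinearMap.rTensor KF qpart V, ?_⟩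
  -- we must show: map (pG i).subtype KF.subtype (rTensor qpart V) = y
  have hgAV : LinearMap.lTensor P gA V = LinearMap.rTensor KA (pG i).subtype wA := by
    have : LinearMap.lTensor P (LinearMap.fst (PowerSeries k) KA KB) (LinearMap.lTensor P g V)
        = LinearMap.lTensor P gA V := by
      rw [← LinearMap.lTensor_comp_apply]
      rfl
    rw [← this, hV]
    show LinearMap.lTensor P (LinearMap.fst (PowerSeries k) KA KB)
      (LinearMap.rTensor (KA × KB) (pG i).subtype w) = _
    rw [lTensor_rTensor_comm]
    congr 1
    show LinearMap.lTensor (pG i) (LinearMap.fst (PowerSeries k) KA KB)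
      (LinearMap.lTensor (pG i) (LinearMap.inl (PowerSeries k) KA KB) wA
        + LinearMap.lTensor (pG i) (LinearMap.inr (PowerSeries k) KA KB) wB) = wA
    rw [map_add, ← LinearMap.lTensor_comp_apply, ← LinearMap.lTensor_comp_apply,
      LinearMap.fst_comp_inl, LinearMap.fst_comp_inr, LinearMap.lTensor_id,
      LinearMap.lTensor_zero]
    simp
  have hgBV : LinearMap.lTensor P gB V = LinearMap.rTensor KB (pG i).subtype wB := by
    have : LinearMap.lTensor P (LinearMap.snd (PowerSeries k) KA KB) (LinearMap.lTensor P g V)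
        = LinearMap.lTensor P gB V := by
      rw [← LinearMap.lTensor_comp_apply]
      rfl
    rw [← this, hV]
    show LinearMap.lTensor P (LinearMap.snd (PowerSeries k) KA KB)
      (LinearMap.rTensor (KA × KB) (pG i).subtype w) = _
    rw [lTensor_rTensor_comm]
    congr 1
    show LinearMap.lTensor (pG i) (LinearMap.snd (PowerSeries k) KA KB)
      (LinearMap.lTensor (pG i) (LinearMap.inl (PowerSeries k) KA KB) wA
        + LinearMap.lTensor (pG i) (LinearMap.inr (PowerSeries k) KA KB) wB) = wB
    rw [map_add, ← LinearMap.lTensor_comp_apply, ← LinearMap.lTensor_comp_apply,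
      LinearMap.snd_comp_inl, LinearMap.snd_comp_inr, LinearMap.lTensor_id,
      LinearMap.lTensor_zero]
    simp
  -- compare the two candidates through the pair of projections
  have key : ∀ (X : Type) [Ring X] [inst : Algebra (PowerSeries k) X] (KX : Submodule (PowerSeries k) X)
      (pr : F →ₐ[PowerSeries k] X) (gX : KF →ₗ[PowerSeries k] KX)
      (hcompat : pr.toLinearMap.comp KF.subtype = KX.subtype.comp gX)
      (wX : (pG i) ⊗[PowerSeries k] KX)
      (hgXV : LinearMap.lTensor P gX V = LinearMap.rTensor KX (pG i).subtype wX)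
      (hwX : TensorProduct.map (pG i).subtype KX.subtype wX
        = LinearMap.lTensor P pr.toLinearMap y),
      LinearMap.lTensor P pr.toLinearMap
        (TensorProduct.map (pG i).subtype KF.subtype (LinearMap.rTensor KF qpart V))
        = LinearMap.lTensor P pr.toLinearMap y := by
    intro X _ _ KX pr gX hcompat wX hgXV hwX
    calc LinearMap.lTensor P pr.toLinearMap
          (TensorProduct.map (pG i).subtype KF.subtype (LinearMap.rTensor KF qpart V))
        = LinearMap.lTensor P pr.toLinearMap (LinearMap.rTensor F (pG i).subtype
            (LinearMap.lTensor (pG i) KF.subtype (LinearMap.rTensor KF qpart V))) := by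
          rw [hfact]
      _ = LinearMap.rTensor X (pG i).subtype (LinearMap.lTensor (pG i) pr.toLinearMap
            (LinearMap.lTensor (pG i) KF.subtype (LinearMap.rTensor KF qpart V))) := by
          rw [lTensor_rTensor_comm]
      _ = LinearMap.rTensor X (pG i).subtype (LinearMap.lTensor (pG i) (KX.subtype.comp gX)
            (LinearMap.rTensor KF qpart V)) := by
          rw [← LinearMap.lTensor_comp_apply, hcompat]
      _ = LinearMap.rTensor X (pG i).subtype (LinearMap.lTensor (pG i) KX.subtype
            (LinearMap.rTensor KX qpart (LinearMap.lTensor P gX V))) := by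
          rw [LinearMap.lTensor_comp_apply, lTensor_rTensor_comm (g := gX)]
      _ = LinearMap.rTensor X (pG i).subtype (LinearMap.lTensor (pG i) KX.subtype wX) := by
          rw [hgXV, hsplit]
      _ = TensorProduct.map (pG i).subtype KX.subtype wX := (hfact _ _).symm
      _ = LinearMap.lTensor P pr.toLinearMap y := hwX
  have hA' := key A KA prA gA (LinearMap.ext fun x => rfl) wA hgAV hwA
  have hB' := key B' KB prB gB (LinearMap.ext fun x => rfl) wB hgBV hwB
  have hz := tensor_pair_inj prA.toLinearMap prB.toLinearMap hinj
    (TensorProduct.map (pG i).subtype KF.subtype (LinearMap.rTensor KF qpart V) - y)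
    (by rw [map_sub, hA', sub_self]) (by rw [map_sub, hB', sub_self])
  exact sub_eq_zero.mp hz

end ComponentLift

section Statements
variable {k : Type} [Field k] [CharZero k]
  {P : Type} [Ring P] [Algebra (PowerSeries k) P]
  (pG : ℤ → Submodule (PowerSeries k) P) [GradedAlgebra pG]
  [Module.Free (PowerSeries k) P]
  {N : Type} [AddCommGroup N] [Module (PowerSeries k) N] [Module P N]
  [IsScalarTower (PowerSeries k) P N] [SMulCommClass (PowerSeries k) P N]
  [Module.Free (PowerSeries k) N]
  (nG : ℤ → Submodule (PowerSeries k) N) [DirectSum.Decomposition nG]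
  (divB : P →ₗ[PowerSeries k] P →ₗ[PowerSeries k] P)
  (m : P) (φ : N)

/-- Let `B = (P, N, m, φ)` be a quantum background, let `A, B', C` be
parameter rings with morphisms `α : A → C` and `β : B' → C`, and let
`F = A ×_C B' = {(a,b) : α(a) = β(b)}` be the fibered product parameter ring (here
presented by its universal property: `F` comes with projections `prA, prB` with
`α ∘ prA = β ∘ prB`, jointly injective, and hitting exactly the matching pairs; its
grading, maximal ideal and differential are induced componentwise).  Then the natural
map `η : QM_B(A ×_C B') → QM_B(A) ×_{QM_B(C)} QM_B(B')` is a bijection.  (The functor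
`QM_B` satisfies the Schlessinger condition.) -/
theorem quantum_backgrounds_statement_3
    (hB : IsBackground pG nG divB m φ)
    -- the parameter rings `A`, `B'`, `C`, and the fibered product `F = A ×_C B'`
    {A : Type} [Ring A] [Algebra (PowerSeries k) A]
    (aG : ℤ → Submodule (PowerSeries k) A) [GradedAlgebra aG]
    (mA : Submodule (PowerSeries k) A) (dA : A →ₗ[PowerSeries k] A)
    (hA : IsParamRing k A aG mA dA)
    {B' : Type} [Ring B'] [Algebra (PowerSeries k) B']
    (bG : ℤ → Submodule (PowerSeries k) B') [GradedAlgebra bG]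
    (mB : Submodule (PowerSeries k) B') (dB : B' →ₗ[PowerSeries k] B')
    (hB' : IsParamRing k B' bG mB dB)
    {C : Type} [Ring C] [Algebra (PowerSeries k) C]
    (cG : ℤ → Submodule (PowerSeries k) C) [GradedAlgebra cG]
    (mC : Submodule (PowerSeries k) C) (dC : C →ₗ[PowerSeries k] C)
    (hC : IsParamRing k C cG mC dC)
    {F : Type} [Ring F] [Algebra (PowerSeries k) F]
    (fG : ℤ → Submodule (PowerSeries k) F) [GradedAlgebra fG]
    (mF : Submodule (PowerSeries k) F) (dF : F →ₗ[PowerSeries k] F)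
    (hF : IsParamRing k F fG mF dF)
    -- the morphisms `α : A → C` and `β : B' → C` of parameter rings
    (α : A →ₐ[PowerSeries k] C) (β : B' →ₐ[PowerSeries k] C)
    (hα_graded : ∀ (i : ℤ), ∀ a ∈ aG i, α a ∈ cG i)
    (hα_local : ∀ a ∈ mA, α a ∈ mC) (hα_d : ∀ a, α (dA a) = dC (α a))
    (hβ_graded : ∀ (i : ℤ), ∀ b ∈ bG i, β b ∈ cG i)
    (hβ_local : ∀ b ∈ mB, β b ∈ mC) (hβ_d : ∀ b, β (dB b) = dC (β b))
    -- `F` is the fibered product `A ×_C B'`: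
    (prA : F →ₐ[PowerSeries k] A) (prB : F →ₐ[PowerSeries k] B')
    (hprA_graded : ∀ (i : ℤ), ∀ x ∈ fG i, prA x ∈ aG i)
    (hprA_local : ∀ x ∈ mF, prA x ∈ mA) (hprA_d : ∀ x, prA (dF x) = dA (prA x))
    (hprB_graded : ∀ (i : ℤ), ∀ x ∈ fG i, prB x ∈ bG i)
    (hprB_local : ∀ x ∈ mF, prB x ∈ mB) (hprB_d : ∀ x, prB (dF x) = dB (prB x))
    (hcomm : ∀ x : F, α (prA x) = β (prB x))
    (hinj : ∀ x y : F, prA x = prA y → prB x = prB y → x = y)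
    (hpairs : ∀ (a : A) (b : B'), α a = β b → ∃ x : F, prA x = a ∧ prB x = b)
    (hgrade : ∀ (i : ℤ) (x : F), x ∈ fG i ↔ prA x ∈ aG i ∧ prB x ∈ bG i)
    (hmax : ∀ x : F, x ∈ mF ↔ prA x ∈ mA ∧ prB x ∈ mB) :
    -- Conclusion: `η : QM_B(F) → QM_B(A) ×_{QM_B(C)} QM_B(B')` is bijective:
    -- `η` is injective, and
    (∀ π π' : P ⊗[PowerSeries k] F,
        IsQMSol pG divB m φ fG mF dF π → IsQMSol pG divB m φ fG mF dF π' →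
        LinearMap.lTensor P prA.toLinearMap π = LinearMap.lTensor P prA.toLinearMap π' →
        LinearMap.lTensor P prB.toLinearMap π = LinearMap.lTensor P prB.toLinearMap π' →
        π = π')
    -- `η` is surjective onto the fibered product of sets:
    ∧ (∀ (πa : P ⊗[PowerSeries k] A) (πb : P ⊗[PowerSeries k] B'),
        IsQMSol pG divB m φ aG mA dA πa → IsQMSol pG divB m φ bG mB dB πb →
        LinearMap.lTensor P α.toLinearMap πa = LinearMap.lTensor P β.toLinearMap πb →
        ∃ π : P ⊗[PowerSeries k] F, IsQMSol pG divB m φ fG mF dF π ∧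
          LinearMap.lTensor P prA.toLinearMap π = πa ∧
          LinearMap.lTensor P prB.toLinearMap π = πb) := by
  classical
  constructor
  · -- injectivity of η
    intro π π' _ _ hA1 hB1
    have h0 : LinearMap.lTensor P prA.toLinearMap (π - π') = 0 := by
      rw [map_sub, hA1, sub_self]
    have h1 : LinearMap.lTensor P prB.toLinearMap (π - π') = 0 := by
      rw [map_sub, hB1, sub_self]
    exact sub_eq_zero.mp (tensor_pair_inj prA.toLinearMap prB.toLinearMap hinj (π - π') h0 h1)
  · -- surjectivity of η
    intro πa πb ha hb hmatch
    obtain ⟨haMem, na, haVan, haEq⟩ := ha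
    obtain ⟨hbMem, nb, hbVan, hbEq⟩ := hb
    set fprod := prA.toLinearMap.prod prB.toLinearMap with hfprod
    set dmap : (A × B') →ₗ[PowerSeries k] C :=
      (α.toLinearMap.comp (LinearMap.fst (PowerSeries k) A B'))
        - (β.toLinearMap.comp (LinearMap.snd (PowerSeries k) A B')) with hdmap
    have hex : Function.Exact fprod dmap := by
      intro y
      constructor
      · intro h0
        have hy : α y.1 - β y.2 = 0 := by simpa [hdmap] using h0
        obtain ⟨x, hx1, hx2⟩ := hpairs y.1 y.2 (sub_eq_zero.mp hy)
        refine ⟨x, ?_⟩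
        show fprod x = y
        rw [hfprod]
        exact Prod.ext (by simpa using hx1) (by simpa using hx2)
      · rintro ⟨x, rfl⟩
        have : dmap (fprod x) = α (prA x) - β (prB x) := by simp [hdmap, hfprod]
        rw [this, hcomm x, sub_self]
    have hexT := Module.Flat.lTensor_exact P hex
    set x0 := LinearMap.lTensor P (LinearMap.inl (PowerSeries k) A B') πa
      + LinearMap.lTensor P (LinearMap.inr (PowerSeries k) A B') πb with hx0def
    have hx0 : LinearMap.lTensor P dmap x0 = 0 := by
      have c1 : dmap.comp (LinearMap.inl (PowerSeries k) A B') = α.toLinearMap := by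
        ext a; simp [hdmap]
      have c2 : dmap.comp (LinearMap.inr (PowerSeries k) A B') = -β.toLinearMap := by
        ext b; simp [hdmap]
      rw [hx0def, map_add, ← LinearMap.lTensor_comp_apply, ← LinearMap.lTensor_comp_apply,
        c1, c2, LinearMap.lTensor_neg, LinearMap.neg_apply, hmatch]
      simp
    obtain ⟨π, hπ⟩ := (hexT x0).mp hx0
    have e1A : LinearMap.lTensor P (LinearMap.fst (PowerSeries k) A B') x0 = πa := by
      rw [hx0def, map_add, ← LinearMap.lTensor_comp_apply, ← LinearMap.lTensor_comp_apply,
        LinearMap.fst_comp_inl, LinearMap.fst_comp_inr, LinearMap.lTensor_id,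
        LinearMap.lTensor_zero]
      simp
    have e1B : LinearMap.lTensor P (LinearMap.snd (PowerSeries k) A B') x0 = πb := by
      rw [hx0def, map_add, ← LinearMap.lTensor_comp_apply, ← LinearMap.lTensor_comp_apply,
        LinearMap.snd_comp_inl, LinearMap.snd_comp_inr, LinearMap.lTensor_id,
        LinearMap.lTensor_zero]
      simp
    have hπA : LinearMap.lTensor P prA.toLinearMap π = πa := by
      have e2 : (LinearMap.fst (PowerSeries k) A B').comp fprod = prA.toLinearMap := by
        rw [hfprod]; exact LinearMap.fst_prod _ _
      calc LinearMap.lTensor P prA.toLinearMap π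
          = LinearMap.lTensor P ((LinearMap.fst (PowerSeries k) A B').comp fprod) π := by
            rw [e2]
        _ = LinearMap.lTensor P (LinearMap.fst (PowerSeries k) A B')
            (LinearMap.lTensor P fprod π) := LinearMap.lTensor_comp_apply _ _ _ _
        _ = πa := by rw [hπ, e1A]
    have hπB : LinearMap.lTensor P prB.toLinearMap π = πb := by
      have e2 : (LinearMap.snd (PowerSeries k) A B').comp fprod = prB.toLinearMap := by
        rw [hfprod]; exact LinearMap.snd_prod _ _
      calc LinearMap.lTensor P prB.toLinearMap π
          = LinearMap.lTensor P ((LinearMap.snd (PowerSeries k) A B').comp fprod) π := by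
            rw [e2]
        _ = LinearMap.lTensor P (LinearMap.snd (PowerSeries k) A B')
            (LinearMap.lTensor P fprod π) := LinearMap.lTensor_comp_apply _ _ _ _
        _ = πb := by rw [hπ, e1B]
    -- membership in the degree-zero part of P ⊗ 𝔪_F
    have hKA : πa ∈ ⨆ i : ℤ, LinearMap.range
        (TensorProduct.map (pG i).subtype ((aG (-i) ⊓ mA)).subtype) := by
      rw [← degZeroMax_eq]; exact haMem
    have hKB : πb ∈ ⨆ i : ℤ, LinearMap.range
        (TensorProduct.map (pG i).subtype ((bG (-i) ⊓ mB)).subtype) := by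
      rw [← degZeroMax_eq]; exact hbMem
    have hmem : π ∈ degZeroMax pG fG mF := by
      rw [degZeroMax_eq]
      obtain ⟨s, hs⟩ := tensor_proj_sum pG π
      rw [hs s (subset_refl s)]
      refine Submodule.sum_mem _ fun i _ => ?_
      refine Submodule.mem_iSup_of_mem i ?_
      have hyA : LinearMap.lTensor P prA.toLinearMap (LinearMap.rTensor F (gradProj pG i) π)
          ∈ LinearMap.range (TensorProduct.map (pG i).subtype ((aG (-i) ⊓ mA)).subtype) := by
        rw [lTensor_rTensor_comm, hπA]
        exact rTensor_gradProj_mem pG (fun i => aG (-i) ⊓ mA) hKA i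
      have hyB : LinearMap.lTensor P prB.toLinearMap (LinearMap.rTensor F (gradProj pG i) π)
          ∈ LinearMap.range (TensorProduct.map (pG i).subtype ((bG (-i) ⊓ mB)).subtype) := by
        rw [lTensor_rTensor_comm, hπB]
        exact rTensor_gradProj_mem pG (fun i => bG (-i) ⊓ mB) hKB i
      have hyM : LinearMap.lTensor P α.toLinearMap (LinearMap.lTensor P prA.toLinearMap
            (LinearMap.rTensor F (gradProj pG i) π))
          = LinearMap.lTensor P β.toLinearMap (LinearMap.lTensor P prB.toLinearMap
            (LinearMap.rTensor F (gradProj pG i) π)) := by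
        calc LinearMap.lTensor P α.toLinearMap (LinearMap.lTensor P prA.toLinearMap
              (LinearMap.rTensor F (gradProj pG i) π))
            = LinearMap.lTensor P α.toLinearMap (LinearMap.rTensor A (gradProj pG i) πa) := by
              rw [lTensor_rTensor_comm, hπA]
          _ = LinearMap.rTensor C (gradProj pG i) (LinearMap.lTensor P α.toLinearMap πa) :=
              lTensor_rTensor_comm _ _ _
          _ = LinearMap.rTensor C (gradProj pG i) (LinearMap.lTensor P β.toLinearMap πb) := by
              rw [hmatch]
          _ = LinearMap.lTensor P β.toLinearMap (LinearMap.rTensor B' (gradProj pG i) πb) :=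
              (lTensor_rTensor_comm _ _ _).symm
          _ = LinearMap.lTensor P β.toLinearMap (LinearMap.lTensor P prB.toLinearMap
              (LinearMap.rTensor F (gradProj pG i) π)) := by
              rw [lTensor_rTensor_comm (g := prB.toLinearMap), hπB]
      refine component_lift pG (aG (-i) ⊓ mA) (bG (-i) ⊓ mB) (fG (-i) ⊓ mF) α β prA prB hinj
        (fun x hx => Submodule.mem_inf.mpr
          ⟨hprA_graded _ _ (Submodule.mem_inf.mp hx).1, hprA_local _ (Submodule.mem_inf.mp hx).2⟩)
        (fun x hx => Submodule.mem_inf.mpr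
          ⟨hprB_graded _ _ (Submodule.mem_inf.mp hx).1, hprB_local _ (Submodule.mem_inf.mp hx).2⟩)
        hcomm
        (fun a b haK hbK hab => ?_) i _ hyA hyB hyM
      obtain ⟨x, hx1, hx2⟩ := hpairs a b hab
      refine ⟨x, Submodule.mem_inf.mpr ⟨?_, ?_⟩, hx1, hx2⟩
      · refine (hgrade (-i) x).mpr ⟨?_, ?_⟩
        · rw [hx1]; exact (Submodule.mem_inf.mp haK).1
        · rw [hx2]; exact (Submodule.mem_inf.mp hbK).1
      · refine (hmax x).mpr ⟨?_, ?_⟩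
        · rw [hx1]; exact (Submodule.mem_inf.mp haK).2
        · rw [hx2]; exact (Submodule.mem_inf.mp hbK).2
    -- the quantum master equation for π
    have hm1A : LinearMap.lTensor P prA.toLinearMap (m ⊗ₜ[PowerSeries k] (1 : F))
        = m ⊗ₜ[PowerSeries k] (1 : A) := by
      rw [LinearMap.lTensor_tmul]; simp
    have hm1B : LinearMap.lTensor P prB.toLinearMap (m ⊗ₜ[PowerSeries k] (1 : F))
        = m ⊗ₜ[PowerSeries k] (1 : B') := by
      rw [LinearMap.lTensor_tmul]; simp
    have hvan : ∀ j ≥ max na nb,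
        ((dbA pG divB fG).flip π ^ j) (m ⊗ₜ[PowerSeries k] (1 : F)) = 0 ∧
        ((dbA pG divB fG).flip π ^ j) (dPi pG dF π) = 0 := by
      intro j hj
      constructor
      · refine tensor_pair_inj prA.toLinearMap prB.toLinearMap hinj _ ?_ ?_
        · rw [dbA_flip_pow_natural pG divB fG aG prA hprA_graded, hπA, hm1A]
          exact (haVan j (le_trans (le_max_left na nb) hj)).1
        · rw [dbA_flip_pow_natural pG divB fG bG prB hprB_graded, hπB, hm1B]
          exact (hbVan j (le_trans (le_max_right na nb) hj)).1
      · refine tensor_pair_inj prA.toLinearMap prB.toLinearMap hinj _ ?_ ?_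
        · rw [dbA_flip_pow_natural pG divB fG aG prA hprA_graded, hπA,
            dPi_natural pG prA dF dA hprA_d, hπA]
          exact (haVan j (le_trans (le_max_left na nb) hj)).2
        · rw [dbA_flip_pow_natural pG divB fG bG prB hprB_graded, hπB,
            dPi_natural pG prB dF dB hprB_d, hπB]
          exact (hbVan j (le_trans (le_max_right na nb) hj)).2
    have heq : actVac (k := k) (A := F) φ
        (expConj pG divB m fG π (max na nb) - expD pG divB fG dF π (max na nb)) = 0 := by
      refine tensor_pair_inj (M := N) prA.toLinearMap prB.toLinearMap hinj _ ?_ ?_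
      · rw [actVac_natural φ prA, map_sub, expConj_natural pG divB m fG aG prA hprA_graded,
          expD_natural pG divB fG aG prA hprA_graded dF dA hprA_d, hπA,
          expConj_trunc pG divB m aG πa (le_max_left na nb) (fun j hj => (haVan j hj).1),
          expD_trunc pG divB aG dA πa (le_max_left na nb) (fun j hj => (haVan j hj).2)]
        exact haEq
      · rw [actVac_natural φ prB, map_sub, expConj_natural pG divB m fG bG prB hprB_graded,
          expD_natural pG divB fG bG prB hprB_graded dF dB hprB_d, hπB,
          expConj_trunc pG divB m bG πb (le_max_right na nb) (fun j hj => (hbVan j hj).1),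
          expD_trunc pG divB bG dB πb (le_max_right na nb) (fun j hj => (hbVan j hj).2)]
        exact hbEq
    exact ⟨π, ⟨hmem, max na nb, hvan, heq⟩, hπA, hπB⟩

end Statements
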